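/- Let η ∈ (0,4] with η ∉ {1/2, 1}, set Y(y) = y^{1/η} for y > 0, and let U = (0,∞) × (0,∞) ⊆ ℝ². The set of triples (a,b,c) of smooth real-valued functions on U satisfying the system ∂_y a = 0; (Y+x)·∂_x a + (Y+x)·∂_y b + 2a + Y′·b = 0; (Y+x)·∂_x b + (Y+x)·∂_y c + b + 2Y′·c = 0; ∂_x c = 0 is a real vector space of dimension exactly 2. -/

import Mathlib

noncomputable section

/-- The partial derivative of `f : ℝ² → ℝ` in the `i`-th coordinate direction
(`0 ↦ x`, `1 ↦ y`). -/
def pd (i : Fin 2) (f : ℝ × ℝ → ℝ) (p : ℝ × ℝ) : ℝ :=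
  fderiv ℝ f p (if i = 0 then ((1 : ℝ), (0 : ℝ)) else ((0 : ℝ), (1 : ℝ)))

/-- `(a,b,c)` is a smooth solution on `U = (0,∞)×(0,∞)` of the system of PDEs expressing
that `F = a p₁² + b p₁p₂ + c p₂²` is an integral of the geodesic flow of
`ds² = 2(Y(y)+x)dxdy` with `Y(y) = y^{1/η}` (case 3c). -/
def Sol3c (η : ℝ) (a b c : ℝ × ℝ → ℝ) : Prop :=
  ContDiffOn ℝ (⊤ : ℕ∞) a (Set.Ioi 0 ×ˢ Set.Ioi 0) ∧
  ContDiffOn ℝ (⊤ : ℕ∞) b (Set.Ioi 0 ×ˢ Set.Ioi 0) ∧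
  ContDiffOn ℝ (⊤ : ℕ∞) c (Set.Ioi 0 ×ˢ Set.Ioi 0) ∧
  ∀ p ∈ (Set.Ioi 0 ×ˢ Set.Ioi 0 : Set (ℝ × ℝ)),
    pd 1 a p = 0 ∧
    (p.2 ^ (1/η) + p.1) * pd 0 a p + (p.2 ^ (1/η) + p.1) * pd 1 b p
      + 2 * a p + deriv (fun t : ℝ => t ^ (1/η)) p.2 * b p = 0 ∧
    (p.2 ^ (1/η) + p.1) * pd 0 b p + (p.2 ^ (1/η) + p.1) * pd 1 c p
      + b p + 2 * deriv (fun t : ℝ => t ^ (1/η)) p.2 * c p = 0 ∧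
    pd 0 c p = 0

namespace Stmt13Aux


open Set Filter Topology

abbrev UU : Set (ℝ × ℝ) := Set.Ioi 0 ×ˢ Set.Ioi 0

lemma isOpen_UU : IsOpen UU := isOpen_Ioi.prod isOpen_Ioi
lemma convex_UU : Convex ℝ UU := (convex_Ioi 0).prod (convex_Ioi 0)

variable {f g : ℝ × ℝ → ℝ} {p : ℝ × ℝ}

lemma mem1 (hp : p ∈ UU) : 0 < p.1 := (Set.mem_prod.1 hp).1
lemma mem2 (hp : p ∈ UU) : 0 < p.2 := (Set.mem_prod.1 hp).2

lemma pd_of_hasFDerivAt {L : ℝ × ℝ →L[ℝ] ℝ} (i : Fin 2) (h : HasFDerivAt f L p) :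
    pd i f p = L (if i = 0 then ((1 : ℝ), (0 : ℝ)) else ((0 : ℝ), (1 : ℝ))) := by
  rw [pd, h.fderiv]

lemma smooth_le1 : (1 : WithTop ℕ∞) ≤ ((⊤:ℕ∞) : WithTop ℕ∞) := by exact_mod_cast le_top
lemma smooth_add_one : ((⊤:ℕ∞) : WithTop ℕ∞) + 1 ≤ ((⊤:ℕ∞) : WithTop ℕ∞) := by
  exact_mod_cast le_top

lemma contDiffAt_of_on (hf : ContDiffOn ℝ (⊤:ℕ∞) f UU) (hp : p ∈ UU) :
    ContDiffAt ℝ (⊤:ℕ∞) f p := (hf p hp).contDiffAt (isOpen_UU.mem_nhds hp)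

lemma diffAt (hf : ContDiffOn ℝ (⊤:ℕ∞) f UU) (hp : p ∈ UU) : DifferentiableAt ℝ f p :=
  (contDiffAt_of_on hf hp).differentiableAt (by simp)

lemma contDiffAt_pd (i : Fin 2) (hf : ContDiffAt ℝ (⊤:ℕ∞) f p) :
    ContDiffAt ℝ (⊤:ℕ∞) (pd i f) p := by
  have h1 : ContDiffAt ℝ (⊤:ℕ∞) (fderiv ℝ f) p := hf.fderiv_right smooth_add_one
  exact ((ContinuousLinearMap.apply ℝ ℝ
    (if i = 0 then ((1:ℝ),(0:ℝ)) else ((0:ℝ),(1:ℝ)))).contDiff.contDiffAt).comp p h1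

lemma contDiffOn_pd (i : Fin 2) (hf : ContDiffOn ℝ (⊤:ℕ∞) f UU) :
    ContDiffOn ℝ (⊤:ℕ∞) (pd i f) UU := fun p hp =>
  (contDiffAt_pd i (contDiffAt_of_on hf hp)).contDiffWithinAt

lemma pd_congrOn (h : ∀ q ∈ UU, f q = g q) (hp : p ∈ UU) (i : Fin 2) :
    pd i f p = pd i g p := by
  have hev : f =ᶠ[𝓝 p] g := Filter.eventuallyEq_of_mem (isOpen_UU.mem_nhds hp) h
  rw [pd, pd, hev.fderiv_eq]

lemma pd_zeroOn (h : ∀ q ∈ UU, f q = 0) (hp : p ∈ UU) (i : Fin 2) :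
    pd i f p = 0 := by
  rw [pd_congrOn (g := fun _ => (0:ℝ)) h hp i, pd, fderiv_const_apply]
  simp

lemma pd_mul (i : Fin 2) (hf : DifferentiableAt ℝ f p) (hg : DifferentiableAt ℝ g p) :
    pd i (fun q => f q * g q) p = pd i f p * g p + f p * pd i g p := by
  simp only [pd, fderiv_fun_mul hf hg]
  simp only [ContinuousLinearMap.add_apply, ContinuousLinearMap.coe_smul', Pi.smul_apply,
    smul_eq_mul]
  ring

lemma pd_add (i : Fin 2) (hf : DifferentiableAt ℝ f p) (hg : DifferentiableAt ℝ g p) :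
    pd i (fun q => f q + g q) p = pd i f p + pd i g p := by
  simp only [pd, fderiv_fun_add hf hg]
  simp

lemma pd_sub (i : Fin 2) (hf : DifferentiableAt ℝ f p) (hg : DifferentiableAt ℝ g p) :
    pd i (fun q => f q - g q) p = pd i f p - pd i g p := by
  simp only [pd, fderiv_fun_sub hf hg]
  simp

lemma pd_const_mul (i : Fin 2) (c : ℝ) (hf : DifferentiableAt ℝ f p) :
    pd i (fun q => c * f q) p = c * pd i f p := by
  simp only [pd, fderiv_const_mul hf c]
  simp

lemma pd_neg (i : Fin 2) : pd i (fun q => -f q) p = - pd i f p := by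
  simp [pd, fderiv_neg]

lemma pd_const (i : Fin 2) (c : ℝ) : pd i (fun _ : ℝ × ℝ => c) p = 0 := by
  simp [pd, fderiv_const_apply]

lemma pd_fst (i : Fin 2) : pd i (fun q : ℝ × ℝ => q.1) p = if i = 0 then 1 else 0 := by
  rw [pd_of_hasFDerivAt i hasFDerivAt_fst]
  by_cases h : i = 0 <;> simp [h]

lemma pd_snd (i : Fin 2) : pd i (fun q : ℝ × ℝ => q.2) p = if i = 0 then 0 else 1 := by
  rw [pd_of_hasFDerivAt i hasFDerivAt_snd]
  by_cases h : i = 0 <;> simp [h]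

/-- Clairaut on an open set. -/
lemma pd_symm (hf : ContDiffOn ℝ (⊤:ℕ∞) f UU) (hp : p ∈ UU) :
    pd 0 (pd 1 f) p = pd 1 (pd 0 f) p := by
  have hev : ∀ᶠ q in 𝓝 p, HasFDerivAt f (fderiv ℝ f q) q := by
    filter_upwards [isOpen_UU.mem_nhds hp] with q hq
    exact (diffAt hf hq).hasFDerivAt
  have h2 : HasFDerivAt (fderiv ℝ f) (fderiv ℝ (fderiv ℝ f) p) p := by
    have : ContDiffAt ℝ (1:ℕ∞) (fderiv ℝ f) p :=
      ((contDiffAt_of_on hf hp).fderiv_right smooth_add_one).of_le smooth_le1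
    exact (this.differentiableAt (by simp)).hasFDerivAt
  have hsymm := second_derivative_symmetric_of_eventually hev h2
    ((1:ℝ),(0:ℝ)) ((0:ℝ),(1:ℝ))
  have e0 : ∀ v : ℝ × ℝ,
      pd 0 (fun q => fderiv ℝ f q v) p = fderiv ℝ (fderiv ℝ f) p ((1:ℝ),(0:ℝ)) v := by
    intro v
    have hc : HasFDerivAt (fun q => (ContinuousLinearMap.apply ℝ ℝ v) (fderiv ℝ f q))
        ((ContinuousLinearMap.apply ℝ ℝ v).comp (fderiv ℝ (fderiv ℝ f) p)) p :=
      ((ContinuousLinearMap.apply ℝ ℝ v).hasFDerivAt).comp p h2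
    have := pd_of_hasFDerivAt (f := fun q => fderiv ℝ f q v) 0 hc
    simpa using this
  have e1 : ∀ v : ℝ × ℝ,
      pd 1 (fun q => fderiv ℝ f q v) p = fderiv ℝ (fderiv ℝ f) p ((0:ℝ),(1:ℝ)) v := by
    intro v
    have hc : HasFDerivAt (fun q => (ContinuousLinearMap.apply ℝ ℝ v) (fderiv ℝ f q))
        ((ContinuousLinearMap.apply ℝ ℝ v).comp (fderiv ℝ (fderiv ℝ f) p)) p :=
      ((ContinuousLinearMap.apply ℝ ℝ v).hasFDerivAt).comp p h2
    have := pd_of_hasFDerivAt (f := fun q => fderiv ℝ f q v) 1 hc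
    simpa using this
  show pd 0 (fun q => fderiv ℝ f q _) p = pd 1 (fun q => fderiv ℝ f q _) p
  rw [e0, e1]
  simpa using hsymm

end Stmt13Aux
namespace Stmt13Aux
open Set Filter Topology

variable {f g : ℝ × ℝ → ℝ} {p q : ℝ × ℝ}

lemma fderiv_eq_zero_of_pd (hf : ContDiffOn ℝ (⊤:ℕ∞) f UU) (hq : q ∈ UU)
    (h0 : pd 0 f q = 0) (h1 : pd 1 f q = 0) : fderiv ℝ f q = 0 := by
  refine ContinuousLinearMap.ext fun v => ?_
  obtain ⟨v1, v2⟩ := v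
  have hv : ((v1, v2) : ℝ × ℝ) = v1 • ((1:ℝ),(0:ℝ)) + v2 • ((0:ℝ),(1:ℝ)) := by
    simp [Prod.ext_iff]
  rw [ContinuousLinearMap.zero_apply, hv, map_add, map_smul, map_smul]
  have h0' : fderiv ℝ f q ((1:ℝ),(0:ℝ)) = 0 := h0
  have h1' : fderiv ℝ f q ((0:ℝ),(1:ℝ)) = 0 := h1
  rw [h0', h1']; simp

/-- A function with both partials vanishing on `U` is constant on `U`. -/
lemma const_of_pd (hf : ContDiffOn ℝ (⊤:ℕ∞) f UU)
    (h0 : ∀ q ∈ UU, pd 0 f q = 0) (h1 : ∀ q ∈ UU, pd 1 f q = 0)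
    (hp : p ∈ UU) (hq : q ∈ UU) : f p = f q := by
  refine convex_UU.is_const_of_fderivWithin_eq_zero
    (hf.differentiableOn (by simp)) (fun z hz => ?_) hp hq
  rw [fderivWithin_of_isOpen isOpen_UU hz]
  exact fderiv_eq_zero_of_pd hf hz (h0 z hz) (h1 z hz)

/-- A function whose `y`-partial vanishes on `U` is constant in `y`. -/
lemma const_y_of_pd (hf : ContDiffOn ℝ (⊤:ℕ∞) f UU) (h1 : ∀ q ∈ UU, pd 1 f q = 0)
    {x y y' : ℝ} (hx : 0 < x) (hy : 0 < y) (hy' : 0 < y') : f (x, y) = f (x, y') := by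
  have key : ∀ t : ℝ, 0 < t → HasDerivAt (fun t => f (x, t)) 0 t := by
    intro t ht
    have htU : ((x, t) : ℝ × ℝ) ∈ UU := by constructor <;> simpa
    have hF : HasFDerivAt f (fderiv ℝ f (x, t)) (x, t) := (diffAt hf htU).hasFDerivAt
    have hline : HasDerivAt (fun t : ℝ => ((x : ℝ), t)) ((0:ℝ), (1:ℝ)) t :=
      (hasDerivAt_const t x).prodMk (hasDerivAt_id t)
    have := hF.comp_hasDerivAt t hline
    have hval : fderiv ℝ f (x, t) ((0:ℝ),(1:ℝ)) = 0 := h1 _ htU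
    simpa [hval, Function.comp_def] using this
  refine (convex_Ioi (0:ℝ)).is_const_of_fderivWithin_eq_zero (f := fun t => f (x, t))
    (fun t ht => ((key t ht).differentiableAt).differentiableWithinAt) (fun t ht => ?_) hy hy'
  rw [fderivWithin_of_isOpen isOpen_Ioi ht]
  have hF0 : HasFDerivAt (fun t => f (x, t)) (0 : ℝ →L[ℝ] ℝ) t := by
    have h := (key t ht).hasFDerivAt
    convert h using 1
    · rfl
    refine ContinuousLinearMap.ext fun u => ?_; simp
  rw [hF0.fderiv]

/-- A function whose `x`-partial vanishes on `U` is constant in `x`. -/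
lemma const_x_of_pd (hf : ContDiffOn ℝ (⊤:ℕ∞) f UU) (h0 : ∀ q ∈ UU, pd 0 f q = 0)
    {x x' y : ℝ} (hx : 0 < x) (hx' : 0 < x') (hy : 0 < y) : f (x, y) = f (x', y) := by
  have key : ∀ t : ℝ, 0 < t → HasDerivAt (fun t => f (t, y)) 0 t := by
    intro t ht
    have htU : ((t, y) : ℝ × ℝ) ∈ UU := by constructor <;> simpa
    have hF : HasFDerivAt f (fderiv ℝ f (t, y)) (t, y) := (diffAt hf htU).hasFDerivAt
    have hline : HasDerivAt (fun t : ℝ => (t, (y : ℝ))) ((1:ℝ), (0:ℝ)) t :=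
      (hasDerivAt_id t).prodMk (hasDerivAt_const t y)
    have := hF.comp_hasDerivAt t hline
    have hval : fderiv ℝ f (t, y) ((1:ℝ),(0:ℝ)) = 0 := h0 _ htU
    simpa [hval, Function.comp_def] using this
  refine (convex_Ioi (0:ℝ)).is_const_of_fderivWithin_eq_zero (f := fun t => f (t, y))
    (fun t ht => ((key t ht).differentiableAt).differentiableWithinAt) (fun t ht => ?_) hx hx'
  rw [fderivWithin_of_isOpen isOpen_Ioi ht]
  have hF0 : HasFDerivAt (fun t => f (t, y)) (0 : ℝ →L[ℝ] ℝ) t := by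
    have h := (key t ht).hasFDerivAt
    convert h using 1
    · rfl
    refine ContinuousLinearMap.ext fun u => ?_; simp
  rw [hF0.fderiv]

end Stmt13Aux
namespace Stmt13Aux
open Set Filter Topology

variable {f g : ℝ × ℝ → ℝ} {p q : ℝ × ℝ}

/-- `q ↦ q.2 ^ r` has the expected derivative at points with positive second coordinate. -/
lemma hasFDerivAt_pow2 (r : ℝ) (hp2 : 0 < p.2) :
    HasFDerivAt (fun q : ℝ × ℝ => q.2 ^ r)
      ((r * p.2 ^ (r - 1)) • ContinuousLinearMap.snd ℝ ℝ ℝ) p :=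
  (Real.hasDerivAt_rpow_const (p := r) (Or.inl hp2.ne')).comp_hasFDerivAt p hasFDerivAt_snd

lemma pd_pow2 (i : Fin 2) (r : ℝ) (hp2 : 0 < p.2) :
    pd i (fun q : ℝ × ℝ => q.2 ^ r) p = if i = 0 then 0 else r * p.2 ^ (r - 1) := by
  rw [pd_of_hasFDerivAt i (hasFDerivAt_pow2 r hp2)]
  by_cases h : i = 0 <;> simp [h]

lemma contDiffAt_pow2 (r : ℝ) (hp2 : 0 < p.2) :
    ContDiffAt ℝ (⊤:ℕ∞) (fun q : ℝ × ℝ => q.2 ^ r) p :=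
  (Real.contDiffAt_rpow_const_of_ne (hp2.ne')).comp p contDiffAt_snd

lemma contDiffOn_pow2 (r : ℝ) : ContDiffOn ℝ (⊤:ℕ∞) (fun q : ℝ × ℝ => q.2 ^ r) UU :=
  fun p hp => (contDiffAt_pow2 r (mem2 hp)).contDiffWithinAt

lemma contDiffOn_W (r : ℝ) : ContDiffOn ℝ (⊤:ℕ∞) (fun q : ℝ × ℝ => q.2 ^ r + q.1) UU :=
  (contDiffOn_pow2 r).add (contDiff_fst.contDiffOn)

lemma W_pos (r : ℝ) (hp : p ∈ UU) : 0 < p.2 ^ r + p.1 :=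
  add_pos (Real.rpow_pos_of_pos (mem2 hp) r) (mem1 hp)

lemma pd_W (i : Fin 2) (r : ℝ) (hp2 : 0 < p.2) :
    pd i (fun q : ℝ × ℝ => q.2 ^ r + q.1) p
      = if i = 0 then 1 else r * p.2 ^ (r - 1) := by
  have hd1 : DifferentiableAt ℝ (fun q : ℝ × ℝ => q.2 ^ r) p :=
    (hasFDerivAt_pow2 r hp2).differentiableAt
  rw [pd_add i hd1 differentiable_fst.differentiableAt, pd_pow2 i r hp2, pd_fst]
  by_cases h : i = 0 <;> simp [h]

lemma pd_pow2_0 (r : ℝ) (hp2 : 0 < p.2) :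
    pd 0 (fun q : ℝ × ℝ => q.2 ^ r) p = 0 := by rw [pd_pow2 0 r hp2]; simp

lemma pd_pow2_1 (r : ℝ) (hp2 : 0 < p.2) :
    pd 1 (fun q : ℝ × ℝ => q.2 ^ r) p = r * p.2 ^ (r - 1) := by
  rw [pd_pow2 1 r hp2]; norm_num

lemma pd_W0 (r : ℝ) (hp2 : 0 < p.2) :
    pd 0 (fun q : ℝ × ℝ => q.2 ^ r + q.1) p = 1 := by rw [pd_W 0 r hp2]; simp

lemma pd_W1 (r : ℝ) (hp2 : 0 < p.2) :
    pd 1 (fun q : ℝ × ℝ => q.2 ^ r + q.1) p = r * p.2 ^ (r - 1) := by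
  rw [pd_W 1 r hp2]; norm_num

lemma pd_fst0 : pd 0 (fun q : ℝ × ℝ => q.1) p = 1 := by rw [pd_fst]; simp
lemma pd_fst1 : pd 1 (fun q : ℝ × ℝ => q.1) p = 0 := by rw [pd_fst]; norm_num
lemma pd_snd0 : pd 0 (fun q : ℝ × ℝ => q.2) p = 0 := by rw [pd_snd]; simp
lemma pd_snd1 : pd 1 (fun q : ℝ × ℝ => q.2) p = 1 := by rw [pd_snd]; norm_num

/-- 4×4 Vandermonde-type linear independence. -/
lemma vand4 {A B C D u v w z : ℝ} (huv : u ≠ v) (huw : u ≠ w) (huz : u ≠ z)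
    (hvw : v ≠ w) (hvz : v ≠ z) (hwz : w ≠ z)
    (e0 : A + B + C + D = 0) (e1 : A*u + B*v + C*w + D*z = 0)
    (e2 : A*u^2 + B*v^2 + C*w^2 + D*z^2 = 0) (e3 : A*u^3 + B*v^3 + C*w^3 + D*z^3 = 0) :
    A = 0 ∧ B = 0 ∧ C = 0 ∧ D = 0 := by
  have hA : A * ((u-v)*(u-w)*(u-z)) = 0 := by
    linear_combination e3 - (v+w+z)*e2 + (v*w+v*z+w*z)*e1 - v*w*z*e0
  have hB : B * ((v-u)*(v-w)*(v-z)) = 0 := by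
    linear_combination e3 - (u+w+z)*e2 + (u*w+u*z+w*z)*e1 - u*w*z*e0
  have hC : C * ((w-u)*(w-v)*(w-z)) = 0 := by
    linear_combination e3 - (u+v+z)*e2 + (u*v+u*z+v*z)*e1 - u*v*z*e0
  have hD : D * ((z-u)*(z-v)*(z-w)) = 0 := by
    linear_combination e3 - (u+v+w)*e2 + (u*v+u*w+v*w)*e1 - u*v*w*e0
  have hA0 : A = 0 := by
    rcases mul_eq_zero.1 hA with h | h
    · exact h
    · exact absurd h (by
        simp [sub_eq_zero, mul_eq_zero, huv, huw, huz])
  have hB0 : B = 0 := by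
    rcases mul_eq_zero.1 hB with h | h
    · exact h
    · exact absurd h (by
        simp [sub_eq_zero, mul_eq_zero, huv.symm, hvw, hvz])
  have hC0 : C = 0 := by
    rcases mul_eq_zero.1 hC with h | h
    · exact h
    · exact absurd h (by
        simp [sub_eq_zero, mul_eq_zero, huw.symm, hvw.symm, hwz])
  have hD0 : D = 0 := by
    rcases mul_eq_zero.1 hD with h | h
    · exact h
    · exact absurd h (by
        simp [sub_eq_zero, mul_eq_zero, huz.symm, hvz.symm, hwz.symm])
  exact ⟨hA0, hB0, hC0, hD0⟩

/-- Linear independence of distinct real powers on `(0,∞)`. -/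
lemma power4 {A B C D p1 p2 p3 : ℝ} (h12 : p1 ≠ p2) (h13 : p1 ≠ p3) (h10 : p1 ≠ 0)
    (h23 : p2 ≠ p3) (h20 : p2 ≠ 0) (h30 : p3 ≠ 0)
    (h : ∀ y : ℝ, 0 < y → A * y ^ p1 + B * y ^ p2 + C * y ^ p3 + D = 0) :
    A = 0 ∧ B = 0 ∧ C = 0 ∧ D = 0 := by
  have hmono : StrictMono (fun r : ℝ => (2:ℝ) ^ r) := fun a b hab =>
    (Real.rpow_lt_rpow_left_iff (by norm_num)).2 hab
  have key : ∀ k : ℕ, A * ((2:ℝ)^p1)^k + B * ((2:ℝ)^p2)^k + C * ((2:ℝ)^p3)^k + D = 0 := by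
    intro k
    have h2k : (0:ℝ) < (2:ℝ)^(k:ℕ) := by positivity
    have hy := h ((2:ℝ)^(k:ℕ)) h2k
    have conv : ∀ r : ℝ, ((2:ℝ)^(k:ℕ)) ^ r = ((2:ℝ)^r)^(k:ℕ) := by
      intro r
      rw [← Real.rpow_natCast (2:ℝ) k, ← Real.rpow_natCast ((2:ℝ)^r) k,
        ← Real.rpow_mul (by norm_num), ← Real.rpow_mul (by norm_num), mul_comm]
    rw [conv p1, conv p2, conv p3] at hy
    exact hy
  have e0 := key 0
  have e1 := key 1
  have e2 := key 2
  have e3 := key 3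
  simp only [pow_zero, pow_one, mul_one] at e0 e1
  refine vand4 (z := (1:ℝ)) (fun h => h12 (hmono.injective h)) (fun h => h13 (hmono.injective h))
    ?_ (fun h => h23 (hmono.injective h)) ?_ ?_ (by linear_combination e0)
    (by linear_combination e1) (by linear_combination e2) (by linear_combination e3)
  · intro h
    apply h10; apply hmono.injective
    show (2:ℝ) ^ p1 = (2:ℝ) ^ (0:ℝ)
    rw [h, Real.rpow_zero]
  · intro h
    apply h20; apply hmono.injective
    show (2:ℝ) ^ p2 = (2:ℝ) ^ (0:ℝ)
    rw [h, Real.rpow_zero]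
  · intro h
    apply h30; apply hmono.injective
    show (2:ℝ) ^ p3 = (2:ℝ) ^ (0:ℝ)
    rw [h, Real.rpow_zero]

end Stmt13Aux
namespace Stmt13Aux
open Set Filter Topology

lemma deriv_rpow_at (r y : ℝ) (hy : 0 < y) :
    deriv (fun t : ℝ => t ^ r) y = r * y ^ (r - 1) :=
  Real.deriv_rpow_const y r

lemma sol_basic (η : ℝ) (hη : 0 < η) :
    Sol3c η (fun _ => 1) (fun p => -2 * p.2 * (p.2 ^ (1/η) + p.1)⁻¹) (fun _ => 0) ∧
    Sol3c η (fun _ => 0) (fun p => (p.2 ^ (1/η) + p.1)⁻¹) (fun _ => 0) := by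
  set r := 1/η with hr_def
  have hb2smooth : ContDiffOn ℝ (⊤:ℕ∞) (fun p : ℝ × ℝ => (p.2 ^ r + p.1)⁻¹) UU :=
    (contDiffOn_W r).inv (fun p hp => (W_pos r hp).ne')
  have hb1smooth : ContDiffOn ℝ (⊤:ℕ∞)
      (fun p : ℝ × ℝ => -2 * p.2 * (p.2 ^ r + p.1)⁻¹) UU :=
    ((contDiff_const.mul contDiff_snd).contDiffOn).mul hb2smooth
  -- pointwise derivative computations
  have main : ∀ p ∈ UU,
      pd 0 (fun q : ℝ × ℝ => (q.2 ^ r + q.1)⁻¹) p = -((p.2 ^ r + p.1)^2)⁻¹ ∧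
      pd 1 (fun q : ℝ × ℝ => (q.2 ^ r + q.1)⁻¹) p
        = -((p.2 ^ r + p.1)^2)⁻¹ * (r * p.2 ^ (r-1)) ∧
      pd 0 (fun q : ℝ × ℝ => -2 * q.2 * (q.2 ^ r + q.1)⁻¹) p
        = -2 * p.2 * -((p.2 ^ r + p.1)^2)⁻¹ ∧
      pd 1 (fun q : ℝ × ℝ => -2 * q.2 * (q.2 ^ r + q.1)⁻¹) p
        = -2 * p.2 * (-((p.2 ^ r + p.1)^2)⁻¹ * (r * p.2 ^ (r-1)))
          + (p.2 ^ r + p.1)⁻¹ * -2 := by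
    intro p hp
    have hy := mem2 hp
    have hW := W_pos r hp
    have hWd : HasFDerivAt (fun q : ℝ × ℝ => q.2 ^ r + q.1)
        ((r * p.2 ^ (r-1)) • ContinuousLinearMap.snd ℝ ℝ ℝ + ContinuousLinearMap.fst ℝ ℝ ℝ) p :=
      (hasFDerivAt_pow2 r hy).add hasFDerivAt_fst
    have hb2 : HasFDerivAt (fun q : ℝ × ℝ => (q.2 ^ r + q.1)⁻¹)
        ((-((p.2 ^ r + p.1)^2)⁻¹) •
          ((r * p.2 ^ (r-1)) • ContinuousLinearMap.snd ℝ ℝ ℝ + ContinuousLinearMap.fst ℝ ℝ ℝ)) p := by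
      have h := (hasDerivAt_inv hW.ne').comp_hasFDerivAt p hWd
      simpa [Function.comp_def] using h
    have hc : HasFDerivAt (fun q : ℝ × ℝ => -2 * q.2)
        ((-2:ℝ) • ContinuousLinearMap.snd ℝ ℝ ℝ) p := hasFDerivAt_snd.const_mul (-2)
    have hb1 := hc.fun_mul hb2
    refine ⟨?_, ?_, ?_, ?_⟩
    · rw [pd_of_hasFDerivAt 0 hb2]; simp
    · rw [pd_of_hasFDerivAt 1 hb2]; simp
    · rw [pd_of_hasFDerivAt 0 hb1]; simp
    · rw [pd_of_hasFDerivAt 1 hb1]; simp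
  constructor
  · refine ⟨contDiffOn_const, hb1smooth, contDiffOn_const, ?_⟩
    intro p hp
    obtain ⟨h20, h21, h10, h11⟩ := main p hp
    have hy := mem2 hp
    have hW := W_pos r hp
    rw [deriv_rpow_at r p.2 hy]
    refine ⟨pd_const 1 1, ?_, ?_, pd_const 0 0⟩
    · rw [pd_const, h11]
      field_simp
      ring
    · rw [pd_const, h10]
      field_simp
      ring
  · refine ⟨contDiffOn_const, hb2smooth, contDiffOn_const, ?_⟩
    intro p hp
    obtain ⟨h20, h21, h10, h11⟩ := main p hp
    have hy := mem2 hp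
    have hW := W_pos r hp
    rw [deriv_rpow_at r p.2 hy]
    refine ⟨pd_const 1 0, ?_, ?_, pd_const 0 0⟩
    · rw [pd_const, h21]
      field_simp
      ring
    · rw [pd_const, h20]
      field_simp
      ring

end Stmt13Aux
namespace Stmt13Aux
open Set Filter Topology

lemma completeness (η : ℝ) (hη : 0 < η) (hs1' : 1/η ≠ 1) (hs2' : 1/η ≠ 2)
    (a b c : ℝ × ℝ → ℝ) (hsol : Sol3c η a b c) :
    ∀ p ∈ UU, a p = a (1,1) ∧ c p = 0 ∧
      (p.2 ^ (1/η) + p.1) * b p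
        = -2 * a (1,1) * p.2 + (2 * b (1,1) + 2 * a (1,1)) := by
  obtain ⟨ha, hb, hc, hpde⟩ := hsol
  set s := 1/η with hs_def
  have hs : 0 < s := by positivity
  have hs1 : s ≠ 1 := hs1'
  have hs2 : s ≠ 2 := hs2'
  have h11 : ((1:ℝ),(1:ℝ)) ∈ UU := by constructor <;> norm_num
  -- pde components
  have heq1 : ∀ p ∈ UU, pd 1 a p = 0 := fun p hp => (hpde p hp).1
  have heq4 : ∀ p ∈ UU, pd 0 c p = 0 := fun p hp => (hpde p hp).2.2.2
  have heq2 : ∀ p ∈ UU, (p.2^s + p.1) * pd 0 a p + (p.2^s + p.1) * pd 1 b p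
      + 2 * a p + (s * p.2^(s-1)) * b p = 0 := by
    intro p hp
    have h := (hpde p hp).2.1
    rwa [deriv_rpow_at s p.2 (mem2 hp)] at h
  have heq3 : ∀ p ∈ UU, (p.2^s + p.1) * pd 0 b p + (p.2^s + p.1) * pd 1 c p
      + b p + 2 * (s * p.2^(s-1)) * c p = 0 := by
    intro p hp
    have h := (hpde p hp).2.2.1
    rwa [deriv_rpow_at s p.2 (mem2 hp)] at h
  -- smoothness
  have hW : ContDiffOn ℝ (⊤:ℕ∞) (fun q : ℝ×ℝ => q.2^s + q.1) UU := contDiffOn_W s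
  have ha0 : ContDiffOn ℝ (⊤:ℕ∞) (pd 0 a) UU := contDiffOn_pd 0 ha
  have ha00 : ContDiffOn ℝ (⊤:ℕ∞) (pd 0 (pd 0 a)) UU := contDiffOn_pd 0 ha0
  have ha000 : ContDiffOn ℝ (⊤:ℕ∞) (pd 0 (pd 0 (pd 0 a))) UU := contDiffOn_pd 0 ha00
  have hc1 : ContDiffOn ℝ (⊤:ℕ∞) (pd 1 c) UU := contDiffOn_pd 1 hc
  have hc11 : ContDiffOn ℝ (⊤:ℕ∞) (pd 1 (pd 1 c)) UU := contDiffOn_pd 1 hc1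
  have hc111 : ContDiffOn ℝ (⊤:ℕ∞) (pd 1 (pd 1 (pd 1 c))) UU := contDiffOn_pd 1 hc11
  -- vanishing mixed partials
  have za01 : ∀ p ∈ UU, pd 1 (pd 0 a) p = 0 := fun p hp => by
    rw [← pd_symm ha hp]; exact pd_zeroOn heq1 hp 0
  have za001 : ∀ p ∈ UU, pd 1 (pd 0 (pd 0 a)) p = 0 := fun p hp => by
    rw [← pd_symm ha0 hp]; exact pd_zeroOn za01 hp 0
  have za0001 : ∀ p ∈ UU, pd 1 (pd 0 (pd 0 (pd 0 a))) p = 0 := fun p hp => by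
    rw [← pd_symm ha00 hp]; exact pd_zeroOn za001 hp 0
  have zc10 : ∀ p ∈ UU, pd 0 (pd 1 c) p = 0 := fun p hp => by
    rw [pd_symm hc hp]; exact pd_zeroOn heq4 hp 1
  have zc110 : ∀ p ∈ UU, pd 0 (pd 1 (pd 1 c)) p = 0 := fun p hp => by
    rw [pd_symm hc1 hp]; exact pd_zeroOn zc10 hp 1
  have zc1110 : ∀ p ∈ UU, pd 0 (pd 1 (pd 1 (pd 1 c))) p = 0 := fun p hp => by
    rw [pd_symm hc11 hp]; exact pd_zeroOn zc110 hp 1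
  -- the function B
  have hBsm : ContDiffOn ℝ (⊤:ℕ∞) (fun q : ℝ×ℝ => (q.2^s + q.1) * b q) UU := hW.mul hb
  have hB1 : ∀ p ∈ UU, pd 1 (fun q : ℝ×ℝ => (q.2^s + q.1) * b q) p
      = -((p.2^s + p.1) * pd 0 a p) - 2 * a p := by
    intro p hp
    have h := pd_mul (f := fun q : ℝ×ℝ => q.2^s + q.1) (g := b) 1
      (diffAt hW hp) (diffAt hb hp)
    rw [pd_W1 s (mem2 hp)] at h
    linear_combination h + heq2 p hp
  have hB0 : ∀ p ∈ UU, pd 0 (fun q : ℝ×ℝ => (q.2^s + q.1) * b q) p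
      = -((p.2^s + p.1) * pd 1 c p) - 2 * (s * p.2^(s-1)) * c p := by
    intro p hp
    have h := pd_mul (f := fun q : ℝ×ℝ => q.2^s + q.1) (g := b) 0
      (diffAt hW hp) (diffAt hb hp)
    rw [pd_W0 s (mem2 hp)] at h
    linear_combination h + heq3 p hp
  -- the compatibility identity (E)
  have hE : ∀ p ∈ UU, (p.2^s + p.1) * pd 0 (pd 0 a) p + 3 * pd 0 a p
      - ((p.2^s + p.1) * pd 1 (pd 1 c) p + 3 * ((s * p.2^(s-1)) * pd 1 c p)
        + (2*s*(s-1)) * (p.2^(s-2) * c p)) = 0 := by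
    intro p hp
    have hy := mem2 hp
    have hsym := pd_symm hBsm hp
    have hL : pd 0 (pd 1 (fun q : ℝ×ℝ => (q.2^s + q.1) * b q)) p
        = -(pd 0 a p + (p.2^s + p.1) * pd 0 (pd 0 a) p) - 2 * pd 0 a p := by
      rw [pd_congrOn (g := fun q => -((q.2^s + q.1) * pd 0 a q) - 2 * a q) hB1 hp 0]
      have hd1 : DifferentiableAt ℝ (fun q : ℝ×ℝ => (q.2^s + q.1) * pd 0 a q) p :=
        (diffAt hW hp).mul (diffAt ha0 hp)
      rw [pd_sub 0 hd1.fun_neg ((diffAt ha hp).const_mul 2), pd_neg 0,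
        pd_mul 0 (diffAt hW hp) (diffAt ha0 hp), pd_W0 s hy,
        pd_const_mul 0 2 (diffAt ha hp)]
      ring
    have hR : pd 1 (pd 0 (fun q : ℝ×ℝ => (q.2^s + q.1) * b q)) p
        = -((s * p.2^(s-1)) * pd 1 c p + (p.2^s + p.1) * pd 1 (pd 1 c) p)
          - 2 * ((s * ((s-1) * p.2^(s-2))) * c p + (s * p.2^(s-1)) * pd 1 c p) := by
      rw [pd_congrOn (g := fun q => -((q.2^s + q.1) * pd 1 c q) - 2 * (s * q.2^(s-1)) * c q)
        hB0 hp 1]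
      have hpow : DifferentiableAt ℝ (fun q : ℝ×ℝ => q.2^(s-1)) p :=
        (hasFDerivAt_pow2 (s-1) hy).differentiableAt
      have hd1 : DifferentiableAt ℝ (fun q : ℝ×ℝ => (q.2^s + q.1) * pd 1 c q) p :=
        (diffAt hW hp).mul (diffAt hc1 hp)
      have hd2 : DifferentiableAt ℝ (fun q : ℝ×ℝ => 2 * (s * q.2^(s-1)) * c q) p :=
        (((hpow.const_mul s).const_mul 2).mul (diffAt hc hp))
      rw [pd_sub 1 hd1.fun_neg hd2, pd_neg 1,
        pd_mul 1 (diffAt hW hp) (diffAt hc1 hp), pd_W1 s hy,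
        pd_mul 1 ((hpow.const_mul s).const_mul 2) (diffAt hc hp),
        pd_const_mul 1 2 (hpow.const_mul s), pd_const_mul 1 s hpow, pd_pow2_1 (s-1) hy]
      have hexp : s - 1 - 1 = s - 2 := by ring
      rw [hexp]
      ring
    rw [hL, hR] at hsym
    linear_combination -hsym
  -- E1 : 4 a00 + W a000 - c11 = 0
  have hE1 : ∀ p ∈ UU, 4 * pd 0 (pd 0 a) p + (p.2^s + p.1) * pd 0 (pd 0 (pd 0 a)) p
      - pd 1 (pd 1 c) p = 0 := by
    intro p hp
    have hy := mem2 hp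
    have hz := pd_zeroOn (f := fun q : ℝ×ℝ => (q.2^s + q.1) * pd 0 (pd 0 a) q + 3 * pd 0 a q
      - ((q.2^s + q.1) * pd 1 (pd 1 c) q + 3 * ((s * q.2^(s-1)) * pd 1 c q)
        + (2*s*(s-1)) * (q.2^(s-2) * c q))) hE hp 0
    have hpow1 : DifferentiableAt ℝ (fun q : ℝ×ℝ => q.2^(s-1)) p :=
      (hasFDerivAt_pow2 (s-1) hy).differentiableAt
    have hpow2 : DifferentiableAt ℝ (fun q : ℝ×ℝ => q.2^(s-2)) p :=
      (hasFDerivAt_pow2 (s-2) hy).differentiableAt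
    have hd1 : DifferentiableAt ℝ (fun q : ℝ×ℝ => (q.2^s + q.1) * pd 0 (pd 0 a) q) p :=
      (diffAt hW hp).mul (diffAt ha00 hp)
    have hd2 : DifferentiableAt ℝ (fun q : ℝ×ℝ => 3 * pd 0 a q) p :=
      (diffAt ha0 hp).const_mul 3
    have hd3 : DifferentiableAt ℝ (fun q : ℝ×ℝ => (q.2^s + q.1) * pd 1 (pd 1 c) q) p :=
      (diffAt hW hp).mul (diffAt hc11 hp)
    have hd4 : DifferentiableAt ℝ (fun q : ℝ×ℝ => (s * q.2^(s-1)) * pd 1 c q) p :=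
      (hpow1.const_mul s).mul (diffAt hc1 hp)
    have hd5 : DifferentiableAt ℝ (fun q : ℝ×ℝ => q.2^(s-2) * c q) p :=
      hpow2.mul (diffAt hc hp)
    rw [pd_sub 0 (hd1.fun_add hd2) ((hd3.fun_add (hd4.const_mul 3)).fun_add (hd5.const_mul (2*s*(s-1)))),
      pd_add 0 hd1 hd2, pd_add 0 (hd3.fun_add (hd4.const_mul 3)) (hd5.const_mul (2*s*(s-1))),
      pd_add 0 hd3 (hd4.const_mul 3),
      pd_mul 0 (diffAt hW hp) (diffAt ha00 hp), pd_W0 s hy,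
      pd_const_mul 0 3 (diffAt ha0 hp),
      pd_mul 0 (diffAt hW hp) (diffAt hc11 hp),
      pd_const_mul 0 3 hd4, pd_mul 0 (hpow1.const_mul s) (diffAt hc1 hp),
      pd_const_mul 0 s hpow1, pd_pow2_0 (s-1) hy,
      pd_const_mul 0 (2*s*(s-1)) hd5, pd_mul 0 hpow2 (diffAt hc hp), pd_pow2_0 (s-2) hy,
      zc110 p hp, zc10 p hp, heq4 p hp, pd_W0 s hy] at hz
    linear_combination hz
  -- E2 : Yd * a000 - c111 = 0
  have hE2 : ∀ p ∈ UU, (s * p.2^(s-1)) * pd 0 (pd 0 (pd 0 a)) p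
      - pd 1 (pd 1 (pd 1 c)) p = 0 := by
    intro p hp
    have hy := mem2 hp
    have hz := pd_zeroOn (f := fun q : ℝ×ℝ => 4 * pd 0 (pd 0 a) q
      + (q.2^s + q.1) * pd 0 (pd 0 (pd 0 a)) q - pd 1 (pd 1 c) q) hE1 hp 1
    have hd1 : DifferentiableAt ℝ (fun q : ℝ×ℝ => 4 * pd 0 (pd 0 a) q) p :=
      (diffAt ha00 hp).const_mul 4
    have hd2 : DifferentiableAt ℝ (fun q : ℝ×ℝ => (q.2^s + q.1) * pd 0 (pd 0 (pd 0 a)) q) p :=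
      (diffAt hW hp).mul (diffAt ha000 hp)
    rw [pd_sub 1 (hd1.fun_add hd2) (diffAt hc11 hp), pd_add 1 hd1 hd2,
      pd_const_mul 1 4 (diffAt ha00 hp),
      pd_mul 1 (diffAt hW hp) (diffAt ha000 hp), pd_W1 s hy,
      za001 p hp, za0001 p hp] at hz
    linear_combination hz
  -- a000 has zero x-derivative
  have hE3 : ∀ p ∈ UU, pd 0 (pd 0 (pd 0 (pd 0 a))) p = 0 := by
    intro p hp
    have hy := mem2 hp
    have hz := pd_zeroOn (f := fun q : ℝ×ℝ => (s * q.2^(s-1)) * pd 0 (pd 0 (pd 0 a)) q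
      - pd 1 (pd 1 (pd 1 c)) q) hE2 hp 0
    have hpow1 : DifferentiableAt ℝ (fun q : ℝ×ℝ => q.2^(s-1)) p :=
      (hasFDerivAt_pow2 (s-1) hy).differentiableAt
    rw [pd_sub 0 ((hpow1.const_mul s).fun_mul (diffAt ha000 hp)) (diffAt hc111 hp),
      pd_mul 0 (hpow1.const_mul s) (diffAt ha000 hp),
      pd_const_mul 0 s hpow1, pd_pow2_0 (s-1) hy, zc1110 p hp] at hz
    have hYd : s * p.2^(s-1) ≠ 0 := by
      have := Real.rpow_pos_of_pos hy (s-1)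
      positivity
    have h5 : (s * p.2^(s-1)) * pd 0 (pd 0 (pd 0 (pd 0 a))) p = 0 := by linear_combination hz
    rcases mul_eq_zero.1 h5 with h | h
    · exact absurd h hYd
    · exact h
  -- a000 = 0 on U
  have ha000z : ∀ p ∈ UU, pd 0 (pd 0 (pd 0 a)) p = 0 := by
    intro p hp
    have hy := mem2 hp
    have hz := pd_zeroOn (f := fun q : ℝ×ℝ => 4 * pd 0 (pd 0 a) q
      + (q.2^s + q.1) * pd 0 (pd 0 (pd 0 a)) q - pd 1 (pd 1 c) q) hE1 hp 0
    have hd1 : DifferentiableAt ℝ (fun q : ℝ×ℝ => 4 * pd 0 (pd 0 a) q) p :=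
      (diffAt ha00 hp).const_mul 4
    have hd2 : DifferentiableAt ℝ (fun q : ℝ×ℝ => (q.2^s + q.1) * pd 0 (pd 0 (pd 0 a)) q) p :=
      (diffAt hW hp).mul (diffAt ha000 hp)
    rw [pd_sub 0 (hd1.fun_add hd2) (diffAt hc11 hp), pd_add 0 hd1 hd2,
      pd_const_mul 0 4 (diffAt ha00 hp),
      pd_mul 0 (diffAt hW hp) (diffAt ha000 hp), pd_W0 s hy,
      hE3 p hp, zc110 p hp] at hz
    -- hz : 4 * a000 + (1 * a000 + W * 0) - 0 = 0
    linarith [hz]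
  have hc111z : ∀ p ∈ UU, pd 1 (pd 1 (pd 1 c)) p = 0 := by
    intro p hp
    have h := hE2 p hp
    rw [ha000z p hp] at h
    linarith [h]
  -- a00 is constant
  set K := pd 0 (pd 0 a) (1,1) with hK_def
  have ha00const : ∀ p ∈ UU, pd 0 (pd 0 a) p = K :=
    fun p hp => const_of_pd ha00 ha000z za001 hp h11
  -- c11 = 4K
  have hc11const : ∀ p ∈ UU, pd 1 (pd 1 c) p = 4 * K := by
    intro p hp
    have h := hE1 p hp
    rw [ha00const p hp, ha000z p hp] at h
    linarith [h]
  -- pd 0 a is affine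
  set lam := pd 0 a (1,1) - K with hlam_def
  have ha0lin : ∀ p ∈ UU, pd 0 a p = K * p.1 + lam := by
    intro p hp
    have hsm : ContDiffOn ℝ (⊤:ℕ∞) (fun q : ℝ×ℝ => pd 0 a q - K * q.1) UU :=
      ha0.sub ((contDiff_const.mul contDiff_fst).contDiffOn)
    have hcon := const_of_pd hsm (fun q hq => ?_) (fun q hq => ?_) hp h11
    · simp only at hcon
      have : pd 0 a p - K * p.1 = pd 0 a (1,1) - K * 1 := hcon
      rw [hlam_def]; linarith [this]
    · rw [pd_sub 0 (diffAt ha0 hq) ((differentiable_fst.differentiableAt).const_mul K),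
        pd_const_mul 0 K differentiable_fst.differentiableAt, pd_fst0,
        ha00const q hq]
      ring
    · rw [pd_sub 1 (diffAt ha0 hq) ((differentiable_fst.differentiableAt).const_mul K),
        pd_const_mul 1 K differentiable_fst.differentiableAt, pd_fst1,
        za01 q hq]
      ring
  -- a is quadratic
  set mu := a (1,1) - K/2 - lam with hmu_def
  have haquad : ∀ p ∈ UU, a p = K/2 * (p.1*p.1) + lam * p.1 + mu := by
    intro p hp
    have hxx : DifferentiableAt ℝ (fun q : ℝ×ℝ => q.1 * q.1) (p : ℝ×ℝ) := by fun_prop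
    have hsm : ContDiffOn ℝ (⊤:ℕ∞)
        (fun q : ℝ×ℝ => a q - (K/2 * (q.1*q.1) + lam * q.1)) UU :=
      ha.sub (((contDiff_const.mul (contDiff_fst.mul contDiff_fst)).add
        (contDiff_const.mul contDiff_fst)).contDiffOn)
    have hcon := const_of_pd hsm (fun q hq => ?_) (fun q hq => ?_) hp h11
    · have : a p - (K/2 * (p.1*p.1) + lam * p.1)
          = a (1,1) - (K/2 * (1*1) + lam * 1) := hcon
      rw [hmu_def]; linarith [this]
    · have hxxq : DifferentiableAt ℝ (fun q : ℝ×ℝ => q.1 * q.1) (q : ℝ×ℝ) := by fun_prop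
      rw [pd_sub 0 (diffAt ha hq) ((hxxq.const_mul (K/2)).fun_add
          ((differentiable_fst.differentiableAt).const_mul lam)),
        pd_add 0 (hxxq.const_mul (K/2)) ((differentiable_fst.differentiableAt).const_mul lam),
        pd_const_mul 0 (K/2) hxxq,
        pd_mul 0 differentiable_fst.differentiableAt differentiable_fst.differentiableAt,
        pd_const_mul 0 lam differentiable_fst.differentiableAt, pd_fst0,
        ha0lin q hq]
      ring
    · have hxxq : DifferentiableAt ℝ (fun q : ℝ×ℝ => q.1 * q.1) (q : ℝ×ℝ) := by fun_prop
      rw [pd_sub 1 (diffAt ha hq) ((hxxq.const_mul (K/2)).fun_add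
          ((differentiable_fst.differentiableAt).const_mul lam)),
        pd_add 1 (hxxq.const_mul (K/2)) ((differentiable_fst.differentiableAt).const_mul lam),
        pd_const_mul 1 (K/2) hxxq,
        pd_mul 1 differentiable_fst.differentiableAt differentiable_fst.differentiableAt,
        pd_const_mul 1 lam differentiable_fst.differentiableAt, pd_fst1,
        heq1 q hq]
      ring
  -- pd 1 c is affine
  set nu := pd 1 c (1,1) - 4 * K with hnu_def
  have hc1lin : ∀ p ∈ UU, pd 1 c p = 4 * K * p.2 + nu := by
    intro p hp
    have hsm : ContDiffOn ℝ (⊤:ℕ∞) (fun q : ℝ×ℝ => pd 1 c q - 4 * K * q.2) UU :=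
      hc1.sub ((contDiff_const.mul contDiff_snd).contDiffOn)
    have hcon := const_of_pd hsm (fun q hq => ?_) (fun q hq => ?_) hp h11
    · have : pd 1 c p - 4 * K * p.2 = pd 1 c (1,1) - 4 * K * 1 := hcon
      rw [hnu_def]; linarith [this]
    · rw [pd_sub 0 (diffAt hc1 hq) ((differentiable_snd.differentiableAt).const_mul (4*K)),
        pd_const_mul 0 (4*K) differentiable_snd.differentiableAt, pd_snd0,
        zc10 q hq]
      ring
    · rw [pd_sub 1 (diffAt hc1 hq) ((differentiable_snd.differentiableAt).const_mul (4*K)),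
        pd_const_mul 1 (4*K) differentiable_snd.differentiableAt, pd_snd1,
        hc11const q hq]
      ring
  -- c is quadratic
  set rho := c (1,1) - 2 * K - nu with hrho_def
  have hcquad : ∀ p ∈ UU, c p = 2 * K * (p.2*p.2) + nu * p.2 + rho := by
    intro p hp
    have hsm : ContDiffOn ℝ (⊤:ℕ∞)
        (fun q : ℝ×ℝ => c q - (2 * K * (q.2*q.2) + nu * q.2)) UU :=
      hc.sub (((contDiff_const.mul (contDiff_snd.mul contDiff_snd)).add
        (contDiff_const.mul contDiff_snd)).contDiffOn)
    have hcon := const_of_pd hsm (fun q hq => ?_) (fun q hq => ?_) hp h11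
    · have : c p - (2 * K * (p.2*p.2) + nu * p.2)
          = c (1,1) - (2 * K * (1*1) + nu * 1) := hcon
      rw [hrho_def]; linarith [this]
    · have hyyq : DifferentiableAt ℝ (fun q : ℝ×ℝ => q.2 * q.2) (q : ℝ×ℝ) := by fun_prop
      rw [pd_sub 0 (diffAt hc hq) ((hyyq.const_mul (2*K)).fun_add
          ((differentiable_snd.differentiableAt).const_mul nu)),
        pd_add 0 (hyyq.const_mul (2*K)) ((differentiable_snd.differentiableAt).const_mul nu),
        pd_const_mul 0 (2*K) hyyq,
        pd_mul 0 differentiable_snd.differentiableAt differentiable_snd.differentiableAt,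
        pd_const_mul 0 nu differentiable_snd.differentiableAt, pd_snd0,
        heq4 q hq]
      ring
    · have hyyq : DifferentiableAt ℝ (fun q : ℝ×ℝ => q.2 * q.2) (q : ℝ×ℝ) := by fun_prop
      rw [pd_sub 1 (diffAt hc hq) ((hyyq.const_mul (2*K)).fun_add
          ((differentiable_snd.differentiableAt).const_mul nu)),
        pd_add 1 (hyyq.const_mul (2*K)) ((differentiable_snd.differentiableAt).const_mul nu),
        pd_const_mul 1 (2*K) hyyq,
        pd_mul 1 differentiable_snd.differentiableAt differentiable_snd.differentiableAt,
        pd_const_mul 1 nu differentiable_snd.differentiableAt, pd_snd1,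
        hc1lin q hq]
      ring
  -- the power identity
  have hKey : ∀ y : ℝ, 0 < y →
      (-(K*(4*s^2+8*s+3))) * y^s + (-(s*nu*(2*s+1))) * y^(s-1)
        + (-(2*s*(s-1)*rho)) * y^(s-2) + 3*lam = 0 := by
    intro y hy
    have hyU : ((1:ℝ), y) ∈ UU := by constructor <;> simpa
    have hEy := hE (1,y) hyU
    rw [ha00const _ hyU, hc11const _ hyU, ha0lin _ hyU, hc1lin _ hyU, hcquad _ hyU] at hEy
    simp only at hEy
    have h1 : y^(s-1) * y = y^s := by
      rw [← Real.rpow_add_one hy.ne' (s-1)]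
      norm_num
    have h2 : y^(s-2) * y = y^(s-1) := by
      rw [← Real.rpow_add_one hy.ne' (s-2)]
      congr 1
      ring
    rw [← h1, ← h2] at hEy ⊢
    linear_combination hEy
  have hdist1 : s ≠ s - 1 := by intro h; linarith [h]
  have hdist2 : s ≠ s - 2 := by intro h; linarith [h]
  have hdist3 : s - 1 ≠ s - 2 := by intro h; linarith [h]
  have hne1 : s - 1 ≠ 0 := sub_ne_zero.2 hs1
  have hne2 : s - 2 ≠ 0 := sub_ne_zero.2 hs2
  obtain ⟨hA, hB', hC', hD'⟩ := power4 hdist1 hdist2 hs.ne' hdist3 hne1 hne2 hKey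
  have hKz : K = 0 := by
    have hpos : 0 < 4*s^2+8*s+3 := by positivity
    have h' : K * (4*s^2+8*s+3) = 0 := by linarith [hA]
    rcases mul_eq_zero.1 h' with h | h
    · exact h
    · exact absurd h hpos.ne'
  have hnuz : nu = 0 := by
    have h' : s * nu * (2*s+1) = 0 := by linarith [hB']
    have h2s : (0:ℝ) < 2*s+1 := by linarith
    rcases mul_eq_zero.1 h' with h | h
    · rcases mul_eq_zero.1 h with h3 | h3
      · exact absurd h3 hs.ne'
      · exact h3
    · exact absurd h h2s.ne'
  have hrhoz : rho = 0 := by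
    have h' : 2*s*(s-1)*rho = 0 := by linarith [hC']
    rcases mul_eq_zero.1 h' with h | h
    · exfalso
      rcases mul_eq_zero.1 h with h3 | h3
      · rcases mul_eq_zero.1 h3 with h4 | h4
        · norm_num at h4
        · exact hs.ne' h4
      · exact hne1 h3
    · exact h
  have hlamz : lam = 0 := by linarith [hD']
  -- conclusions about a and c
  have haconst : ∀ p ∈ UU, a p = a (1,1) := by
    intro p hp
    have h := haquad p hp
    have h1 : a (1,1) = K/2 * (1*1) + lam * 1 + mu := haquad (1,1) h11
    rw [hKz, hlamz] at h h1
    linarith [h, h1]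
  have hcz : ∀ p ∈ UU, c p = 0 := by
    intro p hp
    have h := hcquad p hp
    rw [hKz, hnuz, hrhoz] at h
    linarith [h]
  have ha0z : ∀ p ∈ UU, pd 0 a p = 0 := by
    intro p hp
    have h := ha0lin p hp
    rw [hKz, hlamz] at h
    linarith [h]
  have hc1z : ∀ p ∈ UU, pd 1 c p = 0 := by
    intro p hp
    have h := hc1lin p hp
    rw [hKz, hnuz] at h
    linarith [h]
  -- B is affine in y
  have hB1' : ∀ p ∈ UU, pd 1 (fun q : ℝ×ℝ => (q.2^s + q.1) * b q) p = -2 * a (1,1) := by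
    intro p hp
    rw [hB1 p hp, ha0z p hp, haconst p hp]
    ring
  have hB0' : ∀ p ∈ UU, pd 0 (fun q : ℝ×ℝ => (q.2^s + q.1) * b q) p = 0 := by
    intro p hp
    rw [hB0 p hp, hc1z p hp, hcz p hp]
    ring
  have hBaff : ∀ p ∈ UU, (p.2^s + p.1) * b p + 2 * a (1,1) * p.2
      = ((1:ℝ)^s + 1) * b (1,1) + 2 * a (1,1) := by
    intro p hp
    have hsm : ContDiffOn ℝ (⊤:ℕ∞)
        (fun q : ℝ×ℝ => (q.2^s + q.1) * b q + 2 * a (1,1) * q.2) UU :=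
      hBsm.add ((contDiff_const.mul contDiff_snd).contDiffOn)
    have hcon := const_of_pd hsm (fun q hq => ?_) (fun q hq => ?_) hp h11
    · have : (p.2^s + p.1) * b p + 2 * a (1,1) * p.2
          = ((1:ℝ)^s + (1:ℝ)) * b (1,1) + 2 * a (1,1) * 1 := hcon
      linarith [this]
    · rw [pd_add 0 (diffAt hBsm hq) ((differentiable_snd.differentiableAt).const_mul (2*a (1,1))),
        pd_const_mul 0 (2 * a (1,1)) differentiable_snd.differentiableAt, pd_snd0,
        hB0' q hq]
      ring
    · rw [pd_add 1 (diffAt hBsm hq) ((differentiable_snd.differentiableAt).const_mul (2*a (1,1))),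
        pd_const_mul 1 (2 * a (1,1)) differentiable_snd.differentiableAt, pd_snd1,
        hB1' q hq]
      ring
  intro p hp
  refine ⟨haconst p hp, hcz p hp, ?_⟩
  have h := hBaff p hp
  rw [Real.one_rpow] at h
  linarith [h]

end Stmt13Aux

/-- For `η ∈ (0,4]`, `η ∉ {1/2, 1}`, the space of quadratic-in-momenta
integrals of the geodesic flow of `ds² = 2(y^{1/η}+x)dxdy` on `(0,∞)×(0,∞)` has dimension
exactly 2. -/
theorem stmt13 (η : ℝ) (hη : η ∈ Set.Ioc (0:ℝ) 4) (hη2 : η ≠ 1/2) (hη1 : η ≠ 1) :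
    ∃ a₁ b₁ c₁ a₂ b₂ c₂ : ℝ × ℝ → ℝ,
      Sol3c η a₁ b₁ c₁ ∧ Sol3c η a₂ b₂ c₂ ∧
      (∀ t₁ t₂ : ℝ,
        (∀ p ∈ (Set.Ioi 0 ×ˢ Set.Ioi 0 : Set (ℝ × ℝ)),
          t₁ * a₁ p + t₂ * a₂ p = 0 ∧
          t₁ * b₁ p + t₂ * b₂ p = 0 ∧
          t₁ * c₁ p + t₂ * c₂ p = 0) →
        t₁ = 0 ∧ t₂ = 0) ∧
      (∀ a b c : ℝ × ℝ → ℝ, Sol3c η a b c →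
        ∃ t₁ t₂ : ℝ, ∀ p ∈ (Set.Ioi 0 ×ˢ Set.Ioi 0 : Set (ℝ × ℝ)),
          a p = t₁ * a₁ p + t₂ * a₂ p ∧
          b p = t₁ * b₁ p + t₂ * b₂ p ∧
          c p = t₁ * c₁ p + t₂ * c₂ p) := by
  obtain ⟨hη0, hη4⟩ := hη
  have hs1' : 1/η ≠ 1 := by
    intro h
    apply hη1
    field_simp at h
    linarith
  have hs2' : 1/η ≠ 2 := by
    intro h
    apply hη2
    field_simp at h
    linarith
  obtain ⟨hsol1, hsol2⟩ := Stmt13Aux.sol_basic η hη0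
  refine ⟨fun _ => 1, fun p => -2 * p.2 * (p.2 ^ (1/η) + p.1)⁻¹, fun _ => 0,
    fun _ => 0, fun p => (p.2 ^ (1/η) + p.1)⁻¹, fun _ => 0, hsol1, hsol2, ?_, ?_⟩
  · intro t₁ t₂ hall
    have h11 : ((1:ℝ),(1:ℝ)) ∈ (Set.Ioi 0 ×ˢ Set.Ioi 0 : Set (ℝ × ℝ)) := by
      constructor <;> norm_num
    obtain ⟨h1, h2, h3⟩ := hall (1,1) h11
    have e1 : t₁ = 0 := by simpa using h1
    refine ⟨e1, ?_⟩
    rw [e1] at h2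
    simp only [Real.one_rpow] at h2
    norm_num at h2
    exact h2
  · intro a b c hsol
    have hcomp := Stmt13Aux.completeness η hη0 hs1' hs2' a b c hsol
    refine ⟨a (1,1), 2 * b (1,1) + 2 * a (1,1), fun p hp => ?_⟩
    obtain ⟨hA, hC, hB⟩ := hcomp p hp
    have hWpos : 0 < p.2 ^ (1/η) + p.1 := Stmt13Aux.W_pos (1/η) hp
    refine ⟨by simpa using hA, ?_, by simp [hC]⟩
    have hbp : b p = (p.2 ^ (1/η) + p.1)⁻¹ * ((p.2 ^ (1/η) + p.1) * b p) := by
      rw [← mul_assoc, inv_mul_cancel₀ hWpos.ne', one_mul]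
    rw [hbp, hB]
    ring
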